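/- arXiv:1308.4083 — 2 statements merged into one kernel-verified Lean document; each statement's English description precedes it below -/
import Mathlib

section
/- In the Lie algebra n₁ above, the coframe (e^1,...,e^7) = (f^1+f^2, f^6, −f^5, f^3, √3 f^4, −√3 f^1, √3 f^7) satisfies dα = 0 and dβ = 0, where α = (e^{12}−e^{34})∧e^5+(e^{13}−e^{42})∧e^6+(e^{14}−e^{23})∧e^7−3e^{567} and β = −(e^{12}−e^{34})∧e^{67}−(e^{13}−e^{42})∧(e^7∧e^5)−(e^{14}−e^{23})∧e^{56}−3e^{1234}. -/
/- STATEMENT 9: in the Lie algebra n₁, the coframe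
   (e^1,…,e^7) = (f^1+f^2, f^6, −f^5, f^3, √3 f^4, −√3 f^1, √3 f^7)
   yields a harmonic SO(4)-structure: dα = 0 and dβ = 0. -/

noncomputable section

/-- `F i` is the covector `f^{i+1}` inside the exterior algebra of `(ℝ^7)^*`. -/
def F (i : Fin 7) : ExteriorAlgebra ℝ (Fin 7 → ℝ) :=
  ExteriorAlgebra.ι ℝ (Pi.single i 1)

/-- The coframe (e^1,…,e^7) = (f^1+f^2, f^6, −f^5, f^3, √3 f^4, −√3 f^1, √3 f^7). -/
def e : Fin 7 → ExteriorAlgebra ℝ (Fin 7 → ℝ) :=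
  ![F 0 + F 1, F 5, -F 4, F 2, Real.sqrt 3 • F 3, -(Real.sqrt 3 • F 0), Real.sqrt 3 • F 6]

/-- α = (e^{12}−e^{34})∧e^5 + (e^{13}−e^{42})∧e^6 + (e^{14}−e^{23})∧e^7 − 3e^{567}. -/
def α : ExteriorAlgebra ℝ (Fin 7 → ℝ) :=
  (e 0 * e 1 - e 2 * e 3) * e 4 + (e 0 * e 2 - e 3 * e 1) * e 5
    + (e 0 * e 3 - e 1 * e 2) * e 6 - (3:ℝ) • (e 4 * e 5 * e 6)

/-- β = −(e^{12}−e^{34})∧e^{67} − (e^{13}−e^{42})∧(e^7∧e^5) − (e^{14}−e^{23})∧e^{56} − 3e^{1234}. -/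
def β : ExteriorAlgebra ℝ (Fin 7 → ℝ) :=
  -((e 0 * e 1 - e 2 * e 3) * (e 5 * e 6))
    - (e 0 * e 2 - e 3 * e 1) * (e 6 * e 4)
    - (e 0 * e 3 - e 1 * e 2) * (e 4 * e 5)
    - (3:ℝ) • (e 0 * e 1 * e 2 * e 3)

lemma Fsq (i : Fin 7) : F i * F i = 0 := ExteriorAlgebra.ι_sq_zero _

lemma Fsq' (i : Fin 7) (x : ExteriorAlgebra ℝ (Fin 7 → ℝ)) : F i * (F i * x) = 0 := by
  rw [← mul_assoc, Fsq, zero_mul]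

lemma Fswap (i j : Fin 7) (h : j < i) : F i * F j = -(F j * F i) := by
  exact eq_neg_of_add_eq_zero_left (ExteriorAlgebra.ι_add_mul_swap _ _)

lemma Fswap' (i j : Fin 7) (h : j < i) (x : ExteriorAlgebra ℝ (Fin 7 → ℝ)) :
    F i * (F j * x) = -(F j * (F i * x)) := by
  rw [← mul_assoc, Fswap i j h, neg_mul, mul_assoc]

lemma hs3 : Real.sqrt 3 * Real.sqrt 3 = 3 :=
  Real.mul_self_sqrt (by norm_num)

set_option maxHeartbeats 4000000 in
/-- Any linear extension `d` of the Chevalley–Eilenberg differential of n₁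
(structure equations `df³ = f^{27}`, `df⁴ = f^{27}+f^{17}`, `df⁵ = f^{12}`,
`df⁶ = f^{14}+f^{23}+f^{57}`, `df¹ = df² = df⁷ = 0`; 0-based indices) which is an
antiderivation on triple and quadruple products of generators satisfies dα = 0 = dβ. -/
theorem n1_harmonic_SO4
    (d : ExteriorAlgebra ℝ (Fin 7 → ℝ) →ₗ[ℝ] ExteriorAlgebra ℝ (Fin 7 → ℝ))
    (h0 : d (F 0) = 0) (h1 : d (F 1) = 0)
    (h2 : d (F 2) = F 1 * F 6)
    (h3 : d (F 3) = F 1 * F 6 + F 0 * F 6)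
    (h4 : d (F 4) = F 0 * F 1)
    (h5 : d (F 5) = F 0 * F 3 + F 1 * F 2 + F 4 * F 6)
    (h6 : d (F 6) = 0)
    (htriple : ∀ i j k : Fin 7,
      d (F i * F j * F k) = d (F i) * F j * F k - F i * d (F j) * F k + F i * F j * d (F k))
    (hquad : ∀ i j k l : Fin 7,
      d (F i * F j * F k * F l)
        = d (F i) * F j * F k * F l - F i * d (F j) * F k * F l
          + F i * F j * d (F k) * F l - F i * F j * F k * d (F l)) :
    d α = 0 ∧ d β = 0 := by
  have he0 : e 0 = F 0 + F 1 := rfl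
  have he1 : e 1 = F 5 := rfl
  have he2 : e 2 = -F 4 := rfl
  have he3 : e 3 = F 2 := rfl
  have he4 : e 4 = Real.sqrt 3 • F 3 := rfl
  have he5 : e 5 = -(Real.sqrt 3 • F 0) := rfl
  have he6 : e 6 = Real.sqrt 3 • F 6 := rfl
  constructor
  · -- dα = 0
    have hα : α = Real.sqrt 3 • ((F 0 * F 5 * F 3 + F 1 * F 5 * F 3 + F 4 * F 2 * F 3)
        + (F 0 * F 4 * F 0 + F 1 * F 4 * F 0 + F 2 * F 5 * F 0)
        + (F 0 * F 2 * F 6 + F 1 * F 2 * F 6 + F 5 * F 4 * F 6))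
        + ((3:ℝ) * (Real.sqrt 3 * Real.sqrt 3 * Real.sqrt 3)) • (F 3 * F 0 * F 6) := by
      rw [α, he0, he1, he2, he3, he4, he5, he6]
      simp only [smul_mul_assoc, mul_smul_comm, neg_mul, mul_neg, neg_neg, smul_neg,
        add_mul, mul_add, sub_mul, mul_sub, smul_smul, smul_add, smul_sub, sub_eq_add_neg]
      module
    rw [hα]
    simp only [map_add, map_smul, htriple, h0, h1, h2, h3, h4, h5, h6]
    simp (disch := decide) only [mul_assoc, Fsq, Fsq', Fswap, Fswap', mul_neg, neg_mul,
      neg_neg, mul_zero, zero_mul, smul_neg, smul_zero, neg_zero, add_zero, zero_add,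
      zero_sub, sub_zero, mul_add, add_mul, mul_sub, sub_mul, smul_add, smul_sub]
    module
  · -- dβ = 0
    have hβ : β = ((Real.sqrt 3 * Real.sqrt 3) : ℝ) •
        ((F 0 * F 5 * F 0 * F 6 + F 1 * F 5 * F 0 * F 6 + F 4 * F 2 * F 0 * F 6)
          + (F 0 * F 4 * F 6 * F 3 + F 1 * F 4 * F 6 * F 3 + F 2 * F 5 * F 6 * F 3)
          + (F 0 * F 2 * F 3 * F 0 + F 1 * F 2 * F 3 * F 0 + F 5 * F 4 * F 3 * F 0))
        + (3:ℝ) • ((F 0 + F 1) * F 5 * F 4 * F 2) := by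
      rw [β, he0, he1, he2, he3, he4, he5, he6]
      simp only [smul_mul_assoc, mul_smul_comm, neg_mul, mul_neg, neg_neg, smul_neg,
        add_mul, mul_add, sub_mul, mul_sub, smul_smul, smul_add, smul_sub, sub_eq_add_neg,
        ← mul_assoc]
      module
    rw [hβ]
    simp only [add_mul, map_add, map_sub, map_smul, hquad, htriple, h0, h1, h2, h3, h4, h5, h6]
    simp (disch := decide) only [mul_assoc, Fsq, Fsq', Fswap, Fswap', mul_neg, neg_mul,
      neg_neg, mul_zero, zero_mul, smul_neg, smul_zero, neg_zero, add_zero, zero_add,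
      zero_sub, sub_zero, mul_add, add_mul, mul_sub, sub_mul, smul_add, smul_sub, smul_smul, hs3]
    module

end
end

section
/- Fix real numbers p, q, r with pq = 0, pr = 0, and r(q+2r) = 0. Then the structure equations de^j = r·(e_j ⌟ ω_s)∧w^s (summed over s=1,2,3), dw^s = p·ω_s + q·(w_s ⌟ w^{123}) on the 7-dimensional vector space with basis e_1,...,e_4,w_1,w_2,w_3 satisfy d² = 0, hence define a Lie algebra. -/
/- STATEMENT 11: for real p, q, r with pq = 0, pr = 0, r(q+2r) = 0, the structure
   equations de^j = r·Σ_s (e_j⌟ω_s)∧w^s, dw^s = p·ω_s + q·(w_s⌟w^{123}) satisfy d² = 0,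
   hence define a Lie algebra. -/

noncomputable section

/-- Generators of the exterior algebra: `E 0,…,E 3` are `e^1,…,e^4` and
`E 4, E 5, E 6` are `w^1, w^2, w^3`. -/
def E (i : Fin 7) : ExteriorAlgebra ℝ (Fin 7 → ℝ) :=
  ExteriorAlgebra.ι ℝ (Pi.single i 1)

lemma Esq (i : Fin 7) : E i * E i = 0 := ExteriorAlgebra.ι_sq_zero _

lemma Eswap (i j : Fin 7) : E i * E j = -(E j * E i) := by
  have := ExteriorAlgebra.ι_add_mul_swap (R := ℝ) ((Pi.single i 1 : Fin 7 → ℝ))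
    ((Pi.single j 1 : Fin 7 → ℝ))
  unfold E; exact eq_neg_of_add_eq_zero_left this

lemma Esw (i j : Fin 7) (x : ExteriorAlgebra ℝ (Fin 7 → ℝ)) :
    E i * (E j * x) = -(E j * (E i * x)) := by
  rw [← mul_assoc, Eswap, neg_mul, mul_assoc]

lemma Esq' (i : Fin 7) (x : ExteriorAlgebra ℝ (Fin 7 → ℝ)) : E i * (E i * x) = 0 := by
  rw [← mul_assoc, Esq, zero_mul]

set_option maxHeartbeats 2000000 in
/-- For any linear map `d` with the prescribed values on generators
(`de^j = r Σ_s (e_j ⌟ ω_s) ∧ w^s`, `dw^s = p ω_s + q (w_s ⌟ w^{123})`, written out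
explicitly) which satisfies the antiderivation rule on products of two generators,
one has `d(d(generator)) = 0` for all generators; i.e. the equations define a Lie
algebra. -/
theorem structure_equations_define_lie_algebra
    (p q r : ℝ) (hpq : p * q = 0) (hpr : p * r = 0) (hr : r * (q + 2 * r) = 0)
    (d : ExteriorAlgebra ℝ (Fin 7 → ℝ) →ₗ[ℝ] ExteriorAlgebra ℝ (Fin 7 → ℝ))
    (he1 : d (E 0) = r • (E 1 * E 4 + E 2 * E 5 + E 3 * E 6))
    (he2 : d (E 1) = r • (-(E 0 * E 4) + E 3 * E 5 - E 2 * E 6))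
    (he3 : d (E 2) = r • (-(E 3 * E 4) - E 0 * E 5 + E 1 * E 6))
    (he4 : d (E 3) = r • (E 2 * E 4 - E 1 * E 5 - E 0 * E 6))
    (hw1 : d (E 4) = p • (E 0 * E 1 - E 2 * E 3) + q • (E 5 * E 6))
    (hw2 : d (E 5) = p • (E 0 * E 2 - E 3 * E 1) + q • (E 6 * E 4))
    (hw3 : d (E 6) = p • (E 0 * E 3 - E 1 * E 2) + q • (E 4 * E 5))
    (hpair : ∀ i j : Fin 7, d (E i * E j) = d (E i) * E j - E i * d (E j)) :
    ∀ i : Fin 7, d (d (E i)) = 0 := by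
  intro i
  fin_cases i
  · show d (d (E 0)) = 0
    rw [he1, map_smul, map_add, map_add, hpair, hpair, hpair, he2, he3, he4, hw1, hw2, hw3]
    simp only [smul_add, smul_sub, smul_neg, smul_smul, mul_add, add_mul, mul_sub, sub_mul,
      neg_mul, mul_neg, neg_neg, mul_assoc, mul_smul_comm, smul_mul_assoc,
      Esq, Esq', Esw 1 0, Esw 2 0, Esw 2 1, Esw 3 0, Esw 3 1, Esw 3 2, Esw 4 0, Esw 4 1, Esw 4 2, Esw 4 3, Esw 5 0, Esw 5 1, Esw 5 2, Esw 5 3, Esw 5 4, Esw 6 0, Esw 6 1, Esw 6 2, Esw 6 3, Esw 6 4, Esw 6 5, Eswap 1 0, Eswap 2 0, Eswap 2 1, Eswap 3 0, Eswap 3 1, Eswap 3 2, Eswap 4 0, Eswap 4 1, Eswap 4 2, Eswap 4 3, Eswap 5 0, Eswap 5 1, Eswap 5 2, Eswap 5 3, Eswap 5 4, Eswap 6 0, Eswap 6 1, Eswap 6 2, Eswap 6 3, Eswap 6 4, Eswap 6 5, neg_zero, smul_zero, add_zero, zero_add, mul_zero, zero_mul, sub_zero,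
      zero_sub]
    match_scalars <;> linarith [hpq, hpr, hr]
  · show d (d (E 1)) = 0
    rw [he2, map_smul, map_sub, map_add, map_neg, hpair, hpair, hpair, he1, he3, he4, hw1, hw2,
      hw3]
    simp only [smul_add, smul_sub, smul_neg, smul_smul, mul_add, add_mul, mul_sub, sub_mul,
      neg_mul, mul_neg, neg_neg, mul_assoc, mul_smul_comm, smul_mul_assoc,
      Esq, Esq', Esw 1 0, Esw 2 0, Esw 2 1, Esw 3 0, Esw 3 1, Esw 3 2, Esw 4 0, Esw 4 1, Esw 4 2, Esw 4 3, Esw 5 0, Esw 5 1, Esw 5 2, Esw 5 3, Esw 5 4, Esw 6 0, Esw 6 1, Esw 6 2, Esw 6 3, Esw 6 4, Esw 6 5, Eswap 1 0, Eswap 2 0, Eswap 2 1, Eswap 3 0, Eswap 3 1, Eswap 3 2, Eswap 4 0, Eswap 4 1, Eswap 4 2, Eswap 4 3, Eswap 5 0, Eswap 5 1, Eswap 5 2, Eswap 5 3, Eswap 5 4, Eswap 6 0, Eswap 6 1, Eswap 6 2, Eswap 6 3, Eswap 6 4, Eswap 6 5, neg_zero, smul_zero, add_zero, zero_add, mul_zero,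 zero_mul, sub_zero,
      zero_sub]
    match_scalars <;> linarith [hpq, hpr, hr]
  · show d (d (E 2)) = 0
    rw [he3, map_smul, map_add, map_sub, map_neg, hpair, hpair, hpair, he1, he2, he4, hw1, hw2,
      hw3]
    simp only [smul_add, smul_sub, smul_neg, smul_smul, mul_add, add_mul, mul_sub, sub_mul,
      neg_mul, mul_neg, neg_neg, mul_assoc, mul_smul_comm, smul_mul_assoc,
      Esq, Esq', Esw 1 0, Esw 2 0, Esw 2 1, Esw 3 0, Esw 3 1, Esw 3 2, Esw 4 0, Esw 4 1, Esw 4 2, Esw 4 3, Esw 5 0, Esw 5 1, Esw 5 2, Esw 5 3, Esw 5 4, Esw 6 0, Esw 6 1, Esw 6 2, Esw 6 3, Esw 6 4, Esw 6 5, Eswap 1 0, Eswap 2 0, Eswap 2 1, Eswap 3 0, Eswap 3 1, Eswap 3 2, Eswap 4 0, Eswap 4 1, Eswap 4 2, Eswap 4 3, Eswap 5 0, Eswap 5 1, Eswap 5 2, Eswap 5 3, Eswap 5 4, Eswap 6 0, Eswap 6 1, Eswap 6 2, Eswap 6 3, Eswap 6 4, Eswap 6 5, neg_zero, smul_zero,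 add_zero, zero_add, mul_zero, zero_mul, sub_zero,
      zero_sub]
    match_scalars <;> linarith [hpq, hpr, hr]
  · show d (d (E 3)) = 0
    rw [he4, map_smul, map_sub, map_sub, hpair, hpair, hpair, he1, he2, he3, hw1, hw2, hw3]
    simp only [smul_add, smul_sub, smul_neg, smul_smul, mul_add, add_mul, mul_sub, sub_mul,
      neg_mul, mul_neg, neg_neg, mul_assoc, mul_smul_comm, smul_mul_assoc,
      Esq, Esq', Esw 1 0, Esw 2 0, Esw 2 1, Esw 3 0, Esw 3 1, Esw 3 2, Esw 4 0, Esw 4 1, Esw 4 2, Esw 4 3, Esw 5 0, Esw 5 1, Esw 5 2, Esw 5 3, Esw 5 4, Esw 6 0, Esw 6 1, Esw 6 2, Esw 6 3, Esw 6 4, Esw 6 5, Eswap 1 0, Eswap 2 0, Eswap 2 1, Eswap 3 0, Eswap 3 1, Eswap 3 2, Eswap 4 0, Eswap 4 1, Eswap 4 2, Eswap 4 3, Eswap 5 0, Eswap 5 1, Eswap 5 2, Eswap 5 3, Eswap 5 4, Eswap 6 0, Eswap 6 1, Eswap 6 2, Eswap 6 3, Eswap 6 4, Eswap 6 5, neg_zero,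 smul_zero, add_zero, zero_add, mul_zero, zero_mul, sub_zero,
      zero_sub]
    match_scalars <;> linarith [hpq, hpr, hr]
  · show d (d (E 4)) = 0
    rw [hw1, map_add, map_smul, map_smul, map_sub, hpair, hpair, hpair, he1, he2, he3, he4, hw2,
      hw3]
    simp only [smul_add, smul_sub, smul_neg, smul_smul, mul_add, add_mul, mul_sub, sub_mul,
      neg_mul, mul_neg, neg_neg, mul_assoc, mul_smul_comm, smul_mul_assoc,
      Esq, Esq', Esw 1 0, Esw 2 0, Esw 2 1, Esw 3 0, Esw 3 1, Esw 3 2, Esw 4 0, Esw 4 1, Esw 4 2, Esw 4 3, Esw 5 0, Esw 5 1, Esw 5 2, Esw 5 3, Esw 5 4, Esw 6 0, Esw 6 1, Esw 6 2, Esw 6 3, Esw 6 4, Esw 6 5, Eswap 1 0, Eswap 2 0, Eswap 2 1, Eswap 3 0, Eswap 3 1, Eswap 3 2, Eswap 4 0, Eswap 4 1, Eswap 4 2, Eswap 4 3, Eswap 5 0, Eswap 5 1, Eswap 5 2, Eswap 5 3, Eswap 5 4, Eswap 6 0, Eswap 6 1, Eswap 6 2, Eswap 6 3, Eswap 6 4,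 Eswap 6 5, neg_zero, smul_zero, add_zero, zero_add, mul_zero, zero_mul, sub_zero,
      zero_sub]
    match_scalars <;> linarith [hpq, hpr, hr]
  · show d (d (E 5)) = 0
    rw [hw2, map_add, map_smul, map_smul, map_sub, hpair, hpair, hpair, he1, he2, he3, he4, hw1,
      hw3]
    simp only [smul_add, smul_sub, smul_neg, smul_smul, mul_add, add_mul, mul_sub, sub_mul,
      neg_mul, mul_neg, neg_neg, mul_assoc, mul_smul_comm, smul_mul_assoc,
      Esq, Esq', Esw 1 0, Esw 2 0, Esw 2 1, Esw 3 0, Esw 3 1, Esw 3 2, Esw 4 0, Esw 4 1, Esw 4 2, Esw 4 3, Esw 5 0, Esw 5 1, Esw 5 2, Esw 5 3, Esw 5 4, Esw 6 0, Esw 6 1, Esw 6 2, Esw 6 3, Esw 6 4, Esw 6 5, Eswap 1 0, Eswap 2 0, Eswap 2 1, Eswap 3 0, Eswap 3 1, Eswap 3 2, Eswap 4 0, Eswap 4 1, Eswap 4 2, Eswap 4 3, Eswap 5 0, Eswap 5 1, Eswap 5 2, Eswap 5 3, Eswap 5 4, Eswap 6 0, Eswap 6 1, Eswap 6 2, Eswap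 6 3, Eswap 6 4, Eswap 6 5, neg_zero, smul_zero, add_zero, zero_add, mul_zero, zero_mul, sub_zero,
      zero_sub]
    match_scalars <;> linarith [hpq, hpr, hr]
  · show d (d (E 6)) = 0
    rw [hw3, map_add, map_smul, map_smul, map_sub, hpair, hpair, hpair, he1, he2, he3, he4, hw1,
      hw2]
    simp only [smul_add, smul_sub, smul_neg, smul_smul, mul_add, add_mul, mul_sub, sub_mul,
      neg_mul, mul_neg, neg_neg, mul_assoc, mul_smul_comm, smul_mul_assoc,
      Esq, Esq', Esw 1 0, Esw 2 0, Esw 2 1, Esw 3 0, Esw 3 1, Esw 3 2, Esw 4 0, Esw 4 1, Esw 4 2, Esw 4 3, Esw 5 0, Esw 5 1, Esw 5 2, Esw 5 3, Esw 5 4, Esw 6 0, Esw 6 1, Esw 6 2, Esw 6 3, Esw 6 4, Esw 6 5, Eswap 1 0, Eswap 2 0, Eswap 2 1, Eswap 3 0, Eswap 3 1, Eswap 3 2, Eswap 4 0, Eswap 4 1, Eswap 4 2, Eswap 4 3, Eswap 5 0, Eswap 5 1, Eswap 5 2, Eswap 5 3, Eswap 5 4, Eswap 6 0, Eswap 6 1,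 Eswap 6 2, Eswap 6 3, Eswap 6 4, Eswap 6 5, neg_zero, smul_zero, add_zero, zero_add, mul_zero, zero_mul, sub_zero,
      zero_sub]
    match_scalars <;> linarith [hpq, hpr, hr]

end
end
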